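/- Let Θ be a measurable space, and for each θ ∈ Θ let (Z_t(θ))_{t≥0} and (Y_t(θ))_{t≥0} be real-valued processes adapted to a filtration (ℱ_t)_{t∈ℕ₀} on a probability space (Ω, 𝒜, P), with (θ, ω) ↦ Z_t(θ)(ω) jointly measurable for each t. Assume that for each θ: (Y_t(θ)) is a nonnegative supermartingale with Y_0(θ) ≤ 1, and 0 ≤ Z_t(θ) ≤ Y_t(θ) almost surely for all t. Let ν be a fixed (data-free) probability measure on Θ. Then for every δ ∈ (0,1), with probability at least 1−δ, simultaneously for every t ≥ 0 and every probability measure ρ on Θ: ∫_Θ log Z_t(θ) ρ(dθ) ≤ D_KL(ρ‖ν) + log(1/δ), where D_KL(ρ‖ν) = ∫ log(dρ/dν) dρ if ρ is absolutely continuous with respect to ν and +∞ otherwise, and log Z_t(θ) is interpreted as −∞ where Z_t(θ) = 0. -/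

import Mathlib

open MeasureTheory Filter Real Set
open scoped ENNReal NNReal

noncomputable section

lemma dv_aux {Θ : Type*} [MeasurableSpace Θ] (ν ρ : Measure Θ)
    [IsProbabilityMeasure ν] [IsProbabilityMeasure ρ] (hρν : ρ ≪ ν)
    (f : Θ → ℝ) (hf_meas : Measurable f)
    (hf_nonneg : ∀ᵐ θ ∂ν, 0 ≤ f θ)
    (hf_ne : ∀ᵐ θ ∂ρ, f θ ≠ 0)
    (hf_int : Integrable f ν)
    (hlog : Integrable (fun θ => Real.log (f θ)) ρ)
    (hllr : Integrable (llr ρ ν) ρ)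
    (c : ℝ) (hc : ∫ θ, f θ ∂ν ≤ c) :
    ∫ θ, Real.log (f θ) ∂ρ ≤ ∫ θ, llr ρ ν θ ∂ρ + Real.log c := by
  set g : Θ → ℝ := fun θ => (ρ.rnDeriv ν θ).toReal with hg_def
  have hg_meas : Measurable g := (Measure.measurable_rnDeriv ρ ν).ennreal_toReal
  have hg_pos : ∀ᵐ θ ∂ρ, 0 < g θ := by
    filter_upwards [Measure.rnDeriv_pos hρν, hρν.ae_le (Measure.rnDeriv_lt_top ρ ν)] with θ h1 h2
    exact ENNReal.toReal_pos h1.ne' h2.ne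
  have hf_nonneg_ρ : ∀ᵐ θ ∂ρ, 0 ≤ f θ := hρν.ae_le hf_nonneg
  have hf_pos : ∀ᵐ θ ∂ρ, 0 < f θ := by
    filter_upwards [hf_nonneg_ρ, hf_ne] with θ h1 h2 using lt_of_le_of_ne h1 (Ne.symm h2)
  set φ : Θ → ℝ := fun θ => f θ / g θ with hφ_def
  have hφ_meas : Measurable φ := hf_meas.div hg_meas
  have hgφ_int : Integrable (fun θ => g θ * φ θ) ν := by
    refine hf_int.norm.mono' ((hg_meas.mul hφ_meas).aestronglyMeasurable) ?_
    refine Eventually.of_forall fun θ => ?_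
    by_cases h : g θ = 0
    · simp [hφ_def, h]
    · rw [hφ_def]; simp only
      rw [mul_div_cancel₀ _ h]
  have hgφ_le : ∀ᵐ θ ∂ν, g θ * φ θ ≤ f θ := by
    filter_upwards [hf_nonneg] with θ hθ
    by_cases h : g θ = 0
    · simpa [h] using hθ
    · rw [hφ_def]; simp only; rw [mul_div_cancel₀ _ h]
  have hφ_int : Integrable φ ρ := by
    rw [← MeasureTheory.integrable_rnDeriv_smul_iff hρν]
    simpa [smul_eq_mul] using hgφ_int
  set I : ℝ := ∫ θ, φ θ ∂ρ with hI_def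
  have hI_eq : I = ∫ θ, g θ * φ θ ∂ν := by
    rw [hI_def, ← MeasureTheory.integral_rnDeriv_smul (E := ℝ) hρν (f := φ)]
    simp [smul_eq_mul]
    rfl
  have hI_le : I ≤ ∫ θ, f θ ∂ν := by
    rw [hI_eq]; exact integral_mono_ae hgφ_int hf_int hgφ_le
  have hφ_pos : ∀ᵐ θ ∂ρ, 0 < φ θ := by
    filter_upwards [hf_pos, hg_pos] with θ h1 h2 using div_pos h1 h2
  have hI_pos : 0 < I := by
    rw [hI_def, integral_pos_iff_support_of_nonneg_ae (hφ_pos.mono fun _ h => h.le) hφ_int]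
    have h0 : ρ {θ | ¬ 0 < φ θ} = 0 := by
      rw [← ae_iff]; exact hφ_pos
    have h1 : (1 : ℝ≥0∞) = ρ (univ : Set Θ) := (measure_univ).symm
    calc (0 : ℝ≥0∞) < 1 := by norm_num
      _ = ρ (univ : Set Θ) := h1
      _ ≤ ρ ({θ | ¬ 0 < φ θ} ∪ {θ | 0 < φ θ}) :=
          measure_mono (fun θ _ => by
            by_cases h : 0 < φ θ
            · exact Set.mem_union_right _ h
            · exact Set.mem_union_left _ h)
      _ ≤ ρ {θ | ¬ 0 < φ θ} + ρ {θ | 0 < φ θ} := measure_union_le _ _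
      _ = ρ {θ | 0 < φ θ} := by rw [h0, zero_add]
      _ ≤ ρ (Function.support φ) := measure_mono (fun θ h => ne_of_gt h)
  have hc_pos : 0 < c := lt_of_lt_of_le (lt_of_lt_of_le hI_pos hI_le) hc
  -- log φ integrable and equal a.e. to log f - llr
  have h_eq : (fun θ => Real.log (φ θ)) =ᵐ[ρ] fun θ => Real.log (f θ) - llr ρ ν θ := by
    filter_upwards [hf_pos, hg_pos] with θ h1 h2
    rw [hφ_def]; simp only
    rw [Real.log_div h1.ne' h2.ne']
    rfl
  have hlogφ_int : Integrable (fun θ => Real.log (φ θ)) ρ :=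
    (hlog.sub hllr).congr h_eq.symm
  -- tangent bound
  have h_tangent : ∀ᵐ θ ∂ρ, Real.log (φ θ) ≤ Real.log I + (φ θ / I - 1) := by
    filter_upwards [hφ_pos] with θ hθ
    have h1 := Real.log_le_sub_one_of_pos (div_pos hθ hI_pos)
    rw [Real.log_div hθ.ne' hI_pos.ne'] at h1
    linarith
  have h_int_rhs : Integrable (fun θ => Real.log I + (φ θ / I - 1)) ρ := by
    apply Integrable.add (integrable_const _)
    exact (hφ_int.div_const I).sub (integrable_const _)
  have h_logφ_le : ∫ θ, Real.log (φ θ) ∂ρ ≤ Real.log I := by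
    calc ∫ θ, Real.log (φ θ) ∂ρ ≤ ∫ θ, (Real.log I + (φ θ / I - 1)) ∂ρ :=
          integral_mono_ae hlogφ_int h_int_rhs h_tangent
      _ = Real.log I + ((∫ θ, φ θ ∂ρ) / I - 1) := by
          have e1 : ∫ θ, (φ θ / I - 1) ∂ρ = (∫ θ, φ θ ∂ρ) / I - 1 := by
            rw [integral_sub (hφ_int.div_const I) (integrable_const _), integral_div,
              integral_const]
            simp
          have hg1 : Integrable (fun θ => φ θ / I - 1) ρ :=
            (hφ_int.div_const I).sub (integrable_const 1)
          rw [integral_add (integrable_const _) hg1, e1, integral_const]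
          simp
      _ = Real.log I := by rw [← hI_def, div_self hI_pos.ne']; ring
  have h_split : ∫ θ, Real.log (f θ) ∂ρ = ∫ θ, Real.log (φ θ) ∂ρ + ∫ θ, llr ρ ν θ ∂ρ := by
    rw [← integral_add hlogφ_int hllr]
    refine integral_congr_ae ?_
    filter_upwards [h_eq] with θ hθ
    rw [hθ]; ring
  rw [h_split]
  have hlogI : Real.log I ≤ Real.log c := Real.log_le_log hI_pos (hI_le.trans hc)
  linarith


lemma mul_int_aux {Ω : Type*} [m : MeasurableSpace Ω] {P : Measure Ω}
    {X g : Ω → ℝ} (hX : Integrable X P) (hg : AEStronglyMeasurable g P)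
    (hgb : ∀ᵐ ω ∂P, ‖g ω‖ ≤ 1) : Integrable (fun ω => X ω * g ω) P := by
  refine hX.norm.mono' (by exact hX.aestronglyMeasurable.mul hg) ?_
  filter_upwards [hgb] with ω h
  rw [norm_mul]
  calc ‖X ω‖ * ‖g ω‖ ≤ ‖X ω‖ * 1 := mul_le_mul_of_nonneg_left h (norm_nonneg _)
    _ = ‖X ω‖ := mul_one _

lemma pullout_aux {Ω : Type*} {m' : MeasurableSpace Ω} [m : MeasurableSpace Ω]
    (hm' : m' ≤ m) (P : Measure Ω) [IsProbabilityMeasure P]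
    {X g : Ω → ℝ} (hX : StronglyMeasurable[m'] X)
    (hg : Integrable g P) (hXg : Integrable (fun ω => X ω * g ω) P) :
    ∫ ω, X ω * g ω ∂P = ∫ ω, X ω * (P[g|m']) ω ∂P := by
  calc ∫ ω, X ω * g ω ∂P = ∫ ω, (P[fun ω => X ω * g ω|m']) ω ∂P :=
        (integral_condExp (μ := P) (f := fun ω => X ω * g ω) hm').symm
    _ = ∫ ω, X ω * (P[g|m']) ω ∂P := by
        refine integral_congr_ae ?_
        have := condExp_mul_of_stronglyMeasurable_left (μ := P) hX (by exact hXg) hg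
        filter_upwards [this] with ω hω
        exact hω

lemma bound_condexp {Ω : Type*} {m' : MeasurableSpace Ω} [m : MeasurableSpace Ω]
    (hm' : m' ≤ m) (P : Measure Ω) [IsProbabilityMeasure P]
    {g : Ω → ℝ} (hg : Integrable g P) (hgb : ∀ᵐ ω ∂P, ‖g ω‖ ≤ 1) :
    ∀ᵐ ω ∂P, ‖(P[g|m']) ω‖ ≤ 1 := by
  have h1 : P[g|m'] ≤ᵐ[P] P[fun _ => (1:ℝ)|m'] :=
    condExp_mono hg (integrable_const 1)
      (hgb.mono fun ω h => by rw [Real.norm_eq_abs] at h; exact (abs_le.mp h).2)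
  have h2 : P[fun _ => (-1:ℝ)|m'] ≤ᵐ[P] P[g|m'] :=
    condExp_mono (integrable_const (-1)) hg
      (hgb.mono fun ω h => by rw [Real.norm_eq_abs] at h; exact (abs_le.mp h).1)
  rw [condExp_const (μ := P) hm' (1:ℝ)] at h1
  rw [condExp_const (μ := P) hm' (-1:ℝ)] at h2
  filter_upwards [h1, h2] with ω h1 h2
  rw [Real.norm_eq_abs, abs_le]
  exact ⟨h2, h1⟩

lemma super_sum {Ω : Type*} [m : MeasurableSpace Ω] (P : Measure Ω) [IsProbabilityMeasure P]
    (F : Filtration ℕ m) {Y : ℕ → Ω → ℝ} (hY : Supermartingale Y F P)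
    (hYnonneg : ∀ t ω, 0 ≤ Y t ω)
    {A : ℕ → Set Ω} (hA : ∀ k, MeasurableSet[F k] (A k))
    (hdisj : ∀ i j, i < j → A i ∩ A j = ∅) (n : ℕ) :
    ∑ k ∈ Finset.range n, ∫ ω in A k, Y k ω ∂P ≤ ∫ ω, Y 0 ω ∂P := by
  set B : ℕ → Set Ω := fun n => ⋃ k ∈ Finset.range (n+1), A k with hB
  have hBmeasF : ∀ n, MeasurableSet[F n] (B n) := by
    intro n
    refine MeasurableSet.biUnion (Finset.range (n+1)).countable_toSet (fun k hk => ?_)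
    exact F.mono (Nat.lt_succ_iff.mp (Finset.mem_range.mp hk)) _ (hA k)
  have key : ∀ n, ∑ k ∈ Finset.range (n+1), ∫ ω in A k, Y k ω ∂P
      + ∫ ω in (B n)ᶜ, Y n ω ∂P ≤ ∫ ω, Y 0 ω ∂P := by
    intro n
    induction n with
    | zero =>
      have hB0 : B 0 = A 0 := by simp [hB]
      rw [hB0, Finset.sum_range_one]
      exact le_of_eq (integral_add_compl ((F.le 0) _ (hA 0)) (hY.integrable 0))
    | succ n ih =>
      have hsub : A (n+1) ⊆ (B n)ᶜ := by
        intro ω hω hBn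
        simp only [hB, Set.mem_iUnion, Finset.mem_range] at hBn
        obtain ⟨k, hk, hkA⟩ := hBn
        have : ω ∈ A k ∩ A (n+1) := ⟨hkA, hω⟩
        rw [hdisj k (n+1) (Nat.lt_succ_iff.mp hk |>.trans_lt (Nat.lt_succ_self n))] at this
        exact this
      have hBn_succ : B (n+1) = B n ∪ A (n+1) := by
        ext ω
        simp only [hB, Set.mem_iUnion, Finset.mem_range, Set.mem_union]
        constructor
        · rintro ⟨k, hk, hkA⟩
          rcases Nat.lt_succ_iff_lt_or_eq.mp hk with h | h
          · exact Or.inl ⟨k, h, hkA⟩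
          · exact Or.inr (h ▸ hkA)
        · rintro (⟨k, hk, hkA⟩ | h)
          · exact ⟨k, hk.trans (Nat.lt_succ_self _), hkA⟩
          · exact ⟨n+1, Nat.lt_succ_self _, h⟩
      have hunion : A (n+1) ∪ (B (n+1))ᶜ = (B n)ᶜ := by
        rw [hBn_succ, Set.compl_union]
        ext ω
        simp only [Set.mem_union, Set.mem_inter_iff, Set.mem_compl_iff]
        constructor
        · rintro (h | ⟨h1, _⟩)
          · exact hsub h
          · exact h1
        · intro h
          by_cases h2 : ω ∈ A (n+1)
          · exact Or.inl h2
          · exact Or.inr ⟨h, h2⟩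
      have hd2 : Disjoint (A (n+1)) ((B (n+1))ᶜ) := by
        rw [Set.disjoint_left]
        intro ω hω hc
        refine hc ?_
        simp only [hB, Set.mem_iUnion, Finset.mem_range]
        exact ⟨n+1, Nat.lt_succ_self _, hω⟩
      have hBmeas : ∀ k, MeasurableSet (B k) := fun k => (F.le k) _ (hBmeasF k)
      have hAmeas : MeasurableSet (A (n+1)) := (F.le (n+1)) _ (hA (n+1))
      have hsplit : ∫ ω in A (n+1), Y (n+1) ω ∂P + ∫ ω in (B (n+1))ᶜ, Y (n+1) ω ∂P
          = ∫ ω in (B n)ᶜ, Y (n+1) ω ∂P := by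
        rw [← setIntegral_union hd2 (hBmeas (n+1)).compl
          (hY.integrable (n+1)).integrableOn (hY.integrable (n+1)).integrableOn, hunion]
      have hle : ∫ ω in (B n)ᶜ, Y (n+1) ω ∂P ≤ ∫ ω in (B n)ᶜ, Y n ω ∂P :=
        hY.setIntegral_le (Nat.le_succ n) ((hBmeasF n).compl)
      rw [Finset.sum_range_succ]
      linarith [ih]
  rcases n with _ | n
  · simp only [Finset.range_zero, Finset.sum_empty]
    exact integral_nonneg fun ω => hYnonneg 0 ω
  · have h1 := key n
    have h2 : 0 ≤ ∫ ω in (B n)ᶜ, Y n ω ∂P :=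
      setIntegral_nonneg ((F.le n) _ (hBmeasF n)).compl (fun ω _ => hYnonneg n ω)
    linarith


/-- Fubini for mixtures against a bounded factor. -/
lemma fubini_aux {Ω Θ : Type*} [MeasurableSpace Ω] [MeasurableSpace Θ]
    (P : Measure Ω) [IsProbabilityMeasure P] (ν : Measure Θ) [IsProbabilityMeasure ν]
    {W : Θ → Ω → ℝ}
    (hW : Measurable fun p : Θ × Ω => W p.1 p.2)
    (hWint : ∀ θ, Integrable (W θ) P)
    (hWbd : ∀ θ, ∫ ω, ‖W θ ω‖ ∂P ≤ 1)
    {g : Ω → ℝ} (hg : Measurable g) (hgb : ∀ ω, ‖g ω‖ ≤ 1) :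
    Integrable (fun p : Θ × Ω => W p.1 p.2 * g p.2) (ν.prod P) ∧
    ∫ ω, (∫ θ, W θ ω ∂ν) * g ω ∂P = ∫ θ, (∫ ω, W θ ω * g ω ∂P) ∂ν := by
  have hfm : Measurable fun p : Θ × Ω => W p.1 p.2 * g p.2 :=
    hW.mul (hg.comp measurable_snd)
  have hsec : ∀ θ, Integrable (fun ω => W θ ω * g ω) P := by
    intro θ
    refine (hWint θ).norm.mono' ((hWint θ).aestronglyMeasurable.mul
      hg.aestronglyMeasurable) ?_
    refine Eventually.of_forall fun ω => ?_
    rw [norm_mul]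
    calc ‖W θ ω‖ * ‖g ω‖ ≤ ‖W θ ω‖ * 1 := mul_le_mul_of_nonneg_left (hgb ω) (norm_nonneg _)
      _ = ‖W θ ω‖ := mul_one _
  have hint : Integrable (fun p : Θ × Ω => W p.1 p.2 * g p.2) (ν.prod P) := by
    rw [integrable_prod_iff hfm.aestronglyMeasurable]
    constructor
    · exact Eventually.of_forall fun θ => hsec θ
    · refine (integrable_const (1:ℝ)).mono'
        (hfm.norm.stronglyMeasurable.integral_prod_right'.aestronglyMeasurable) ?_
      refine Eventually.of_forall fun θ => ?_
      rw [Real.norm_eq_abs, abs_of_nonneg (by positivity)]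
      calc ∫ ω, ‖W θ ω * g ω‖ ∂P ≤ ∫ ω, ‖W θ ω‖ ∂P := by
            refine integral_mono_ae (hsec θ).norm (hWint θ).norm ?_
            refine Eventually.of_forall fun ω => ?_
            show ‖W θ ω * g ω‖ ≤ ‖W θ ω‖
            rw [norm_mul]
            calc ‖W θ ω‖ * ‖g ω‖ ≤ ‖W θ ω‖ * 1 :=
                  mul_le_mul_of_nonneg_left (hgb ω) (norm_nonneg _)
              _ = ‖W θ ω‖ := mul_one _
        _ ≤ 1 := hWbd θ
  refine ⟨hint, ?_⟩
  have hswap : Integrable (fun p : Ω × Θ => W p.2 p.1 * g p.1) (P.prod ν) := hint.swap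
  calc ∫ ω, (∫ θ, W θ ω ∂ν) * g ω ∂P = ∫ ω, ∫ θ, W θ ω * g ω ∂ν ∂P := by
        refine integral_congr_ae (Eventually.of_forall fun ω => ?_)
        show (∫ θ, W θ ω ∂ν) * g ω = ∫ θ, W θ ω * g ω ∂ν
        exact (integral_mul_const _ _).symm
    _ = ∫ θ, ∫ ω, W θ ω * g ω ∂P ∂ν :=
        integral_integral_swap (f := fun ω θ => W θ ω * g ω) hswap


lemma ae_adapted_aux {Ω Θ : Type*} [MeasurableSpace Θ] [m : MeasurableSpace Ω]
    (P : Measure Ω) [IsProbabilityMeasure P] (ν : Measure Θ) [IsProbabilityMeasure ν]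
    (F : Filtration ℕ m) (t : ℕ)
    {W : Θ → Ω → ℝ} (hW : Measurable fun p : Θ × Ω => W p.1 p.2)
    (hWad : ∀ θ, StronglyMeasurable[F t] (W θ))
    (hWint : ∀ θ, Integrable (W θ) P)
    (hWbd : ∀ θ, ∫ ω, ‖W θ ω‖ ∂P ≤ 1)
    (hMint : Integrable (fun ω => ∫ θ, W θ ω ∂ν) P) :
    (fun ω => ∫ θ, W θ ω ∂ν) =ᵐ[P] P[(fun ω => ∫ θ, W θ ω ∂ν)|F t] := by
  set M : Ω → ℝ := fun ω => ∫ θ, W θ ω ∂ν with hM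
  refine Integrable.ae_eq_of_forall_setIntegral_eq _ _ hMint integrable_condExp ?_
  intro s hs _
  set g : Ω → ℝ := s.indicator (fun _ => (1:ℝ)) with hg
  have hg_meas : Measurable g := measurable_const.indicator hs
  have hg_bd : ∀ ω, ‖g ω‖ ≤ 1 := by
    intro ω; by_cases h : ω ∈ s <;> simp [hg, h]
  have hg_int : Integrable g P := (integrable_const (1:ℝ)).indicator hs
  set h : Ω → ℝ := P[g|F t] with hh
  have hh_sm : StronglyMeasurable[F t] h := stronglyMeasurable_condExp
  have hh_bd : ∀ᵐ ω ∂P, ‖h ω‖ ≤ 1 :=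
    bound_condexp (F.le t) P hg_int (Eventually.of_forall hg_bd)
  set h' : Ω → ℝ := fun ω => max (-1) (min 1 (h ω)) with hh'
  have hh'_measFt : Measurable[F t] h' :=
    Measurable.max measurable_const (Measurable.min measurable_const hh_sm.measurable)
  have hh'_sm : StronglyMeasurable[F t] h' := hh'_measFt.stronglyMeasurable
  have hh'_meas : Measurable h' := hh'_measFt.mono (F.le t) le_rfl
  have hh'_bd : ∀ ω, ‖h' ω‖ ≤ 1 := by
    intro ω
    rw [Real.norm_eq_abs, abs_le]
    constructor
    · exact le_max_left _ _
    · exact max_le (by norm_num) (min_le_left _ _)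
  have hh'_eq : h' =ᵐ[P] h := by
    filter_upwards [hh_bd] with ω hω
    rw [Real.norm_eq_abs, abs_le] at hω
    rw [hh']
    simp only
    rw [min_eq_right hω.2, max_eq_right hω.1]
  have step0 : ∀ (X : Ω → ℝ), StronglyMeasurable[F t] X → Integrable X P →
      ∫ ω, X ω * g ω ∂P = ∫ ω, X ω * h' ω ∂P := by
    intro X hX hXi
    have h1 : Integrable (fun ω => X ω * g ω) P :=
      mul_int_aux hXi hg_meas.aestronglyMeasurable (Eventually.of_forall hg_bd)
    rw [pullout_aux (F.le t) P hX hg_int h1]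
    refine integral_congr_ae ?_
    filter_upwards [hh'_eq] with ω hω
    rw [← hh, hω]
  have ind_eq : ∀ (f : Ω → ℝ), ∫ ω in s, f ω ∂P = ∫ ω, f ω * g ω ∂P := by
    intro f
    rw [← integral_indicator hs]
    refine integral_congr_ae (Eventually.of_forall fun ω => ?_)
    by_cases hω : ω ∈ s <;> simp [hg, hω]
  have fub1 := (fubini_aux P ν hW hWint hWbd hg_meas hg_bd).2
  have fub2 := (fubini_aux P ν hW hWint hWbd hh'_meas hh'_bd).2
  calc ∫ ω in s, M ω ∂P = ∫ ω, M ω * g ω ∂P := ind_eq M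
    _ = ∫ θ, ∫ ω, W θ ω * g ω ∂P ∂ν := fub1
    _ = ∫ θ, ∫ ω, W θ ω * h' ω ∂P ∂ν := by
        refine integral_congr_ae (Eventually.of_forall fun θ => ?_)
        exact step0 (W θ) (hWad θ) (hWint θ)
    _ = ∫ ω, M ω * h' ω ∂P := fub2.symm
    _ = ∫ ω, (P[M|F t]) ω * h' ω ∂P := by
        have e1 : Integrable (fun ω => h' ω * M ω) P := by
          have h2 := mul_int_aux hMint hh'_meas.aestronglyMeasurable
            (Eventually.of_forall hh'_bd)
          exact h2.congr (Eventually.of_forall fun ω => mul_comm _ _)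
        have e2 := pullout_aux (F.le t) P hh'_sm hMint e1
        calc ∫ ω, M ω * h' ω ∂P = ∫ ω, h' ω * M ω ∂P :=
              integral_congr_ae (Eventually.of_forall fun ω => mul_comm _ _)
          _ = ∫ ω, h' ω * (P[M|F t]) ω ∂P := e2
          _ = ∫ ω, (P[M|F t]) ω * h' ω ∂P :=
              integral_congr_ae (Eventually.of_forall fun ω => mul_comm _ _)
    _ = ∫ ω, (P[M|F t]) ω * g ω ∂P :=
        (step0 (P[M|F t]) stronglyMeasurable_condExp integrable_condExp).symm
    _ = ∫ ω in s, (P[M|F t]) ω ∂P := (ind_eq _).symm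


/-- **Proposition (variational / PAC-Bayes template).**
Let `Θ` be a measurable space and, for each `θ ∈ Θ`, let `(Z_t(θ))` and `(Y_t(θ))` be
adapted real processes with `(θ,ω) ↦ Z_t(θ)(ω)` jointly measurable, `(Y_t(θ))` a
nonnegative supermartingale with `Y_0(θ) ≤ 1`, and `0 ≤ Z_t(θ) ≤ Y_t(θ)` a.s.
Let `ν` be a fixed (data-free) probability measure on `Θ`. Then for every `δ ∈ (0,1)`,
with probability at least `1−δ`, simultaneously for every `t ≥ 0` and every probability
measure `ρ` on `Θ`: `∫ log Z_t(θ) ρ(dθ) ≤ D_KL(ρ‖ν) + log(1/δ)`.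

(The KL divergence `D_KL(ρ‖ν) = ∫ log(dρ/dν) dρ` is `+∞` when `ρ` is not absolutely
continuous w.r.t. `ν` or `log(dρ/dν)` is not `ρ`-integrable, and `∫ log Z_t dρ = −∞` when
`Z_t = 0` on a set of positive `ρ`-measure or `log Z_t` is not `ρ`-integrable; in these
cases the inequality holds trivially, which is expressed below by guarding with the
corresponding hypotheses.) -/
theorem variational_template
    {Ω Θ : Type*} [m : MeasurableSpace Ω] [MeasurableSpace Θ]
    (P : Measure Ω) [IsProbabilityMeasure P]
    (F : Filtration ℕ m)
    (Z Y : Θ → ℕ → Ω → ℝ)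
    (hZmeas : ∀ t, Measurable fun p : Θ × Ω => Z p.1 t p.2)
    (hZadapted : ∀ θ, Adapted F (Z θ))
    (hY : ∀ θ, Supermartingale (Y θ) F P)
    (hYnonneg : ∀ θ t ω, 0 ≤ Y θ t ω)
    (hY0 : ∀ θ ω, Y θ 0 ω ≤ 1)
    (hZY : ∀ θ t, ∀ᵐ ω ∂P, 0 ≤ Z θ t ω ∧ Z θ t ω ≤ Y θ t ω)
    (ν : Measure Θ) [IsProbabilityMeasure ν]
    (δ : ℝ) (hδ : δ ∈ Set.Ioo (0 : ℝ) 1) :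
    ENNReal.ofReal (1 - δ) ≤
      P {ω | ∀ t : ℕ, ∀ ρ : Measure Θ, IsProbabilityMeasure ρ →
        ρ ≪ ν →
        (∀ᵐ θ ∂ρ, Z θ t ω ≠ 0) →
        Integrable (fun θ => Real.log (Z θ t ω)) ρ →
        Integrable (MeasureTheory.llr ρ ν) ρ →
        ∫ θ, Real.log (Z θ t ω) ∂ρ ≤
          ∫ θ, MeasureTheory.llr ρ ν θ ∂ρ + Real.log (1 / δ)} := by
  classical
  obtain ⟨hδ0, hδ1⟩ := hδ
  -- basic integrability facts
  have hZint : ∀ θ t, Integrable (Z θ t) P := by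
    intro θ t
    refine ((hY θ).integrable t).mono'
      ((hZadapted θ t).mono (F.le t) le_rfl).aestronglyMeasurable ?_
    filter_upwards [hZY θ t] with ω hω
    rw [Real.norm_eq_abs, abs_of_nonneg hω.1]; exact hω.2
  have hY0int : ∀ θ, ∫ ω, Y θ 0 ω ∂P ≤ 1 := by
    intro θ
    calc ∫ ω, Y θ 0 ω ∂P ≤ ∫ ω, (1:ℝ) ∂P :=
          integral_mono ((hY θ).integrable 0) (integrable_const 1) (fun ω => hY0 θ ω)
      _ = 1 := by simp
  have hYle : ∀ θ t, ∫ ω, Y θ t ω ∂P ≤ ∫ ω, Y θ 0 ω ∂P := by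
    intro θ t
    have h := (hY θ).setIntegral_le (Nat.zero_le t) (s := Set.univ) MeasurableSet.univ
    simpa [setIntegral_univ] using h
  have hZbd : ∀ θ t, ∫ ω, ‖Z θ t ω‖ ∂P ≤ 1 := by
    intro θ t
    calc ∫ ω, ‖Z θ t ω‖ ∂P ≤ ∫ ω, Y θ t ω ∂P := by
          refine integral_mono_ae (hZint θ t).norm ((hY θ).integrable t) ?_
          filter_upwards [hZY θ t] with ω hω
          rw [Real.norm_eq_abs, abs_of_nonneg hω.1]; exact hω.2
      _ ≤ 1 := le_trans (hYle θ t) (hY0int θ)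
  set M : ℕ → Ω → ℝ := fun t ω => ∫ θ, Z θ t ω ∂ν with hM_def
  have hprod : ∀ t, Integrable (fun p : Θ × Ω => Z p.1 t p.2) (ν.prod P) := by
    intro t
    have h := (fubini_aux P ν (hZmeas t) (fun θ => hZint θ t) (fun θ => hZbd θ t)
        (g := fun _ => (1:ℝ)) measurable_const (by intro ω; simp)).1
    exact h.congr (Eventually.of_forall fun p => by simp)
  have hMint : ∀ t, Integrable (M t) P := fun t => (hprod t).swap.integral_prod_left
  set N : ℕ → Ω → ℝ := fun t => P[M t|F t] with hN_def
  have hMN : ∀ t, M t =ᵐ[P] N t := fun t =>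
    ae_adapted_aux P ν F t (hZmeas t) (fun θ => (hZadapted θ t).stronglyMeasurable) (fun θ => hZint θ t)
      (fun θ => hZbd θ t) (hMint t)
  have hNsm : ∀ t, StronglyMeasurable[F t] (N t) := fun t => stronglyMeasurable_condExp
  set A : ℕ → Set Ω := fun k => {ω | 1/δ ≤ N k ω ∧ ∀ j, j < k → N j ω < 1/δ} with hA_def
  have hAmeasF : ∀ k, MeasurableSet[F k] (A k) := by
    intro k
    have h1 : MeasurableSet[F k] {ω | 1/δ ≤ N k ω} :=
      measurableSet_le measurable_const (hNsm k).measurable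
    have heq : A k = {ω | 1/δ ≤ N k ω} ∩ ⋂ j ∈ Finset.range k, {ω | N j ω < 1/δ} := by
      ext ω; simp [hA_def]
    rw [heq]
    refine h1.inter (MeasurableSet.biInter (Finset.range k).countable_toSet fun j hj => ?_)
    exact measurableSet_lt
      ((hNsm j).measurable.mono (F.mono (Finset.mem_range.mp hj).le) le_rfl) measurable_const
  have hAmeas : ∀ k, MeasurableSet (A k) := fun k => (F.le k) _ (hAmeasF k)
  have hAdisj : ∀ i j, i < j → A i ∩ A j = ∅ := by
    intro i j hij
    ext ω
    simp only [Set.mem_inter_iff, Set.mem_empty_iff_false, iff_false, not_and]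
    intro hi hj
    exact absurd hi.1 (not_le.mpr (hj.2 i hij))
  have ind_eq : ∀ (s : Set Ω), MeasurableSet s → ∀ (f : Ω → ℝ),
      ∫ ω in s, f ω ∂P = ∫ ω, f ω * s.indicator (fun _ => (1:ℝ)) ω ∂P := by
    intro s hs f
    rw [← integral_indicator hs]
    refine integral_congr_ae (Eventually.of_forall fun ω => ?_)
    by_cases hω : ω ∈ s <;> simp [hω]
  -- partial sums bound
  have hsum : ∀ n, ∑ k ∈ Finset.range n, (1/δ) * (P (A k)).toReal ≤ 1 := by
    intro n
    have step1 : ∀ k, (1/δ) * (P (A k)).toReal ≤ ∫ ω in A k, M k ω ∂P := by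
      intro k
      have h1 : (1/δ) * (P (A k)).toReal ≤ ∫ ω in A k, N k ω ∂P :=
        setIntegral_ge_of_const_le_real (hAmeas k) (measure_ne_top P _)
          (fun ω hω => hω.1) integrable_condExp.integrableOn
      rwa [hN_def, setIntegral_condExp (F.le k) (hMint k) (hAmeasF k)] at h1
    have step2 : ∀ k, ∫ ω in A k, M k ω ∂P = ∫ θ, ∫ ω in A k, Z θ k ω ∂P ∂ν := by
      intro k
      have hg_meas : Measurable ((A k).indicator (fun _ => (1:ℝ))) :=
        measurable_const.indicator (hAmeas k)
      have hg_bd : ∀ ω, ‖(A k).indicator (fun _ => (1:ℝ)) ω‖ ≤ 1 := by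
        intro ω; by_cases h : ω ∈ A k <;> simp [h]
      have fub := (fubini_aux P ν (hZmeas k) (fun θ => hZint θ k) (fun θ => hZbd θ k)
        hg_meas hg_bd).2
      rw [ind_eq (A k) (hAmeas k) (M k)]
      rw [show (∫ ω, M k ω * (A k).indicator (fun _ => (1:ℝ)) ω ∂P)
          = ∫ θ, ∫ ω, Z θ k ω * (A k).indicator (fun _ => (1:ℝ)) ω ∂P ∂ν from fub]
      refine integral_congr_ae (Eventually.of_forall fun θ => ?_)
      exact (ind_eq (A k) (hAmeas k) (Z θ k)).symm
    have step3 : ∀ θ, ∑ k ∈ Finset.range n, ∫ ω in A k, Z θ k ω ∂P ≤ 1 := by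
      intro θ
      calc ∑ k ∈ Finset.range n, ∫ ω in A k, Z θ k ω ∂P
          ≤ ∑ k ∈ Finset.range n, ∫ ω in A k, Y θ k ω ∂P := by
            refine Finset.sum_le_sum fun k _ => ?_
            refine setIntegral_mono_ae (hZint θ k).integrableOn
              ((hY θ).integrable k).integrableOn ?_
            filter_upwards [hZY θ k] with ω hω using hω.2
        _ ≤ ∫ ω, Y θ 0 ω ∂P := super_sum P F (hY θ) (hYnonneg θ) hAmeasF hAdisj n
        _ ≤ 1 := hY0int θ
    have hsel : ∀ k, Integrable (fun θ => ∫ ω in A k, Z θ k ω ∂P) ν := by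
      intro k
      have hjm : StronglyMeasurable fun p : Θ × Ω =>
          Z p.1 k p.2 * (A k).indicator (fun _ => (1:ℝ)) p.2 :=
        ((hZmeas k).mul ((measurable_const.indicator (hAmeas k)).comp
          measurable_snd)).stronglyMeasurable
      have h2 : StronglyMeasurable fun θ =>
          ∫ ω, Z θ k ω * (A k).indicator (fun _ => (1:ℝ)) ω ∂P :=
        hjm.integral_prod_right'
      have heq : (fun θ => ∫ ω in A k, Z θ k ω ∂P)
          = fun θ => ∫ ω, Z θ k ω * (A k).indicator (fun _ => (1:ℝ)) ω ∂P :=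
        funext fun θ => ind_eq (A k) (hAmeas k) (Z θ k)
      refine (integrable_const (1:ℝ)).mono' ?_ ?_
      · rw [heq]; exact h2.aestronglyMeasurable
      · refine Eventually.of_forall fun θ => ?_
        rw [Real.norm_eq_abs]
        have hb1 : |∫ ω in A k, Z θ k ω ∂P| ≤ ∫ ω in A k, ‖Z θ k ω‖ ∂P := by
          rw [← Real.norm_eq_abs]
          exact norm_integral_le_integral_norm _
        calc |∫ ω in A k, Z θ k ω ∂P| ≤ ∫ ω in A k, ‖Z θ k ω‖ ∂P := hb1
          _ ≤ ∫ ω, ‖Z θ k ω‖ ∂P :=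
            setIntegral_le_integral (hZint θ k).norm
              (Eventually.of_forall fun ω => norm_nonneg _)
          _ ≤ 1 := hZbd θ k
    have main : ∑ k ∈ Finset.range n, ∫ ω in A k, M k ω ∂P ≤ 1 := by
      calc ∑ k ∈ Finset.range n, ∫ ω in A k, M k ω ∂P
          = ∑ k ∈ Finset.range n, ∫ θ, ∫ ω in A k, Z θ k ω ∂P ∂ν :=
            Finset.sum_congr rfl fun k _ => step2 k
        _ = ∫ θ, ∑ k ∈ Finset.range n, ∫ ω in A k, Z θ k ω ∂P ∂ν :=
            (integral_finset_sum _ (fun k _ => hsel k)).symm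
        _ ≤ ∫ θ, (1:ℝ) ∂ν :=
            integral_mono (integrable_finset_sum _ (fun k _ => hsel k))
              (integrable_const 1) step3
        _ = 1 := by simp
    calc ∑ k ∈ Finset.range n, (1/δ) * (P (A k)).toReal
        ≤ ∑ k ∈ Finset.range n, ∫ ω in A k, M k ω ∂P :=
          Finset.sum_le_sum fun k _ => step1 k
      _ ≤ 1 := main
  have hsum2 : ∀ n, ∑ k ∈ Finset.range n, P (A k) ≤ ENNReal.ofReal δ := by
    intro n
    have h := hsum n
    rw [← Finset.mul_sum] at h
    have h1 : ∑ k ∈ Finset.range n, (P (A k)).toReal ≤ δ := by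
      have h2 : (∑ k ∈ Finset.range n, (P (A k)).toReal)
          = δ * ((1/δ) * ∑ k ∈ Finset.range n, (P (A k)).toReal) := by
        field_simp
      rw [h2]
      calc δ * ((1/δ) * ∑ k ∈ Finset.range n, (P (A k)).toReal) ≤ δ * 1 :=
            mul_le_mul_of_nonneg_left h hδ0.le
        _ = δ := mul_one δ
    calc ∑ k ∈ Finset.range n, P (A k)
        = ENNReal.ofReal (∑ k ∈ Finset.range n, (P (A k)).toReal) := by
          rw [ENNReal.ofReal_sum_of_nonneg (fun k _ => ENNReal.toReal_nonneg)]
          exact Finset.sum_congr rfl fun k _ =>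
            (ENNReal.ofReal_toReal (measure_ne_top P _)).symm
      _ ≤ ENNReal.ofReal δ := ENNReal.ofReal_le_ofReal h1
  have hUnion : P (⋃ k, A k) ≤ ENNReal.ofReal δ := by
    rw [measure_iUnion ?_ hAmeas]
    · rw [ENNReal.tsum_eq_iSup_sum]
      refine iSup_le fun s => ?_
      obtain ⟨n, hn⟩ := s.exists_nat_subset_range
      exact le_trans (Finset.sum_le_sum_of_subset hn) (hsum2 n)
    · intro i j hij
      rw [Function.onFun, Set.disjoint_iff_inter_eq_empty]
      rcases lt_or_gt_of_ne hij with hlt | hgt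
      · exact hAdisj i j hlt
      · rw [Set.inter_comm]; exact hAdisj j i hgt
  set U : Set Ω := ⋃ t, {ω | 1/δ ≤ N t ω} with hU_def
  have hUA : U ⊆ ⋃ k, A k := by
    intro ω hω
    rw [hU_def, Set.mem_iUnion] at hω
    have hex : ∃ t, 1/δ ≤ N t ω := hω
    refine Set.mem_iUnion.mpr ⟨Nat.find hex, ?_⟩
    exact ⟨Nat.find_spec hex, fun j hj => not_le.mp (Nat.find_min hex hj)⟩
  have hUbd : P U ≤ ENNReal.ofReal δ := le_trans (measure_mono hUA) hUnion
  have hUmeas : MeasurableSet U :=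
    MeasurableSet.iUnion fun t => measurableSet_le measurable_const
      ((hNsm t).measurable.mono (F.le t) le_rfl)
  -- a.e. regularity facts
  have hae_sec_int : ∀ᵐ ω ∂P, ∀ t, Integrable (fun θ => Z θ t ω) ν := by
    rw [ae_all_iff]
    intro t
    exact (hprod t).prod_left_ae
  have hae_nonneg : ∀ᵐ ω ∂P, ∀ t, ∀ᵐ θ ∂ν, 0 ≤ Z θ t ω := by
    rw [ae_all_iff]
    intro t
    have hset : MeasurableSet {p : Ω × Θ | Z p.2 t p.1 < 0} :=
      measurableSet_lt ((hZmeas t).comp measurable_swap) measurable_const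
    have hz : (P.prod ν) {p : Ω × Θ | Z p.2 t p.1 < 0} = 0 := by
      rw [← Measure.prod_swap, Measure.map_apply measurable_swap hset]
      have hpre : Prod.swap ⁻¹' {p : Ω × Θ | Z p.2 t p.1 < 0}
          = {p : Θ × Ω | Z p.1 t p.2 < 0} := rfl
      rw [hpre]
      have hset2 : MeasurableSet {p : Θ × Ω | Z p.1 t p.2 < 0} :=
        measurableSet_lt (hZmeas t) measurable_const
      rw [Measure.prod_apply hset2]
      have hnull : ∀ θ, P {a | Z θ t a < 0} = 0 := by
        intro θ
        refine measure_mono_null ?_ (ae_iff.mp (hZY θ t))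
        intro ω hω
        exact fun hcon => absurd hcon.1 (not_le.mpr hω)
      simp [hnull]
    have h2 := (Measure.measure_prod_null hset).mp hz
    filter_upwards [h2] with ω hω
    rw [ae_iff]
    refine measure_mono_null ?_ hω
    intro θ hθ
    exact not_le.mp hθ
  have hMNall : ∀ᵐ ω ∂P, ∀ t, M t ω = N t ω := by
    rw [ae_all_iff]
    intro t
    exact hMN t
  have hae : ∀ᵐ ω ∂P, (∀ t, M t ω = N t ω) ∧ (∀ t, Integrable (fun θ => Z θ t ω) ν) ∧
      (∀ t, ∀ᵐ θ ∂ν, 0 ≤ Z θ t ω) := by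
    filter_upwards [hMNall, hae_sec_int, hae_nonneg] with ω h1 h2 h3
    exact ⟨h1, h2, h3⟩
  set G : Set Ω := {ω | ∀ t : ℕ, ∀ ρ : Measure Θ, IsProbabilityMeasure ρ →
        ρ ≪ ν →
        (∀ᵐ θ ∂ρ, Z θ t ω ≠ 0) →
        Integrable (fun θ => Real.log (Z θ t ω)) ρ →
        Integrable (MeasureTheory.llr ρ ν) ρ →
        ∫ θ, Real.log (Z θ t ω) ∂ρ ≤
          ∫ θ, MeasureTheory.llr ρ ν θ ∂ρ + Real.log (1 / δ)} with hG_def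
  set Props : Set Ω := {ω | (∀ t, M t ω = N t ω) ∧ (∀ t, Integrable (fun θ => Z θ t ω) ν) ∧
      (∀ t, ∀ᵐ θ ∂ν, 0 ≤ Z θ t ω)} with hProps_def
  have hPropsc : P Propsᶜ = 0 := by
    rw [hProps_def, Set.compl_setOf]
    exact ae_iff.mp hae
  have hsubset : Uᶜ ∩ Props ⊆ G := by
    rintro ω ⟨hωU, hωP⟩
    rw [hG_def, Set.mem_setOf_eq]
    intro t ρ hρ hac hne hint hllrint
    haveI := hρ
    have hNlt : N t ω < 1/δ := by
      by_contra hcon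
      exact hωU (Set.mem_iUnion.mpr ⟨t, not_lt.mp hcon⟩)
    have hMle : ∫ θ, Z θ t ω ∂ν ≤ 1/δ := by
      have := hωP.1 t
      rw [hM_def] at this
      simp only at this
      rw [this]
      exact hNlt.le
    exact dv_aux ν ρ hac (fun θ => Z θ t ω)
      ((hZmeas t).comp measurable_prodMk_right)
      (hωP.2.2 t) hne (hωP.2.1 t) hint hllrint (1/δ) hMle
  calc ENNReal.ofReal (1 - δ) = 1 - ENNReal.ofReal δ := by
        rw [ENNReal.ofReal_sub 1 hδ0.le, ENNReal.ofReal_one]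
    _ ≤ 1 - P U := tsub_le_tsub_left hUbd 1
    _ = P Uᶜ := (prob_compl_eq_one_sub hUmeas).symm
    _ ≤ P (Uᶜ ∩ Props) + P Propsᶜ := by
        refine le_trans (measure_mono ?_) (measure_union_le _ _)
        intro ω hω
        by_cases h : ω ∈ Props
        · exact Or.inl ⟨hω, h⟩
        · exact Or.inr h
    _ = P (Uᶜ ∩ Props) := by rw [hPropsc, add_zero]
    _ ≤ P G := measure_mono hsubset

end
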